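/- The Λ-duplicate D has a Gδ-diagonal: the families 𝒢_p = {V(u,i,p) : (u,i) ∈ D}, p ∈ ℕ, form a Gδ-diagonal sequence. In particular, for any two distinct points (u₁,i₁), (u₂,i₂) ∈ D there exists p such that no member of 𝒢_p contains both points. -/

import Mathlib

/-- An element of Kurepa's tree `Λ`: an injective function `t : α → ω` with countable
ordinal domain `α` and coinfinite range.  The function is represented as a total function
on ordinals which takes the junk value `0` outside of the domain. -/
structure Lambda : Type 1 where
  toFun : Ordinal.{0} → ℕ
  dom : Ordinal.{0}
  countable : dom.card ≤ Cardinal.aleph0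
  inj : ∀ β γ, β < dom → γ < dom → toFun β = toFun γ → β = γ
  coinfinite : {n : ℕ | ∀ β, β < dom → toFun β ≠ n}.Infinite
  junk : ∀ β, ¬ β < dom → toFun β = 0

/-- The tree order on `Λ`: `s ≼ t` iff `t` extends `s`. -/
def Lambda.le (s t : Lambda) : Prop :=
  s.dom ≤ t.dom ∧ ∀ β, β < s.dom → s.toFun β = t.toFun β

/-- The strict tree order on `Λ`. -/
def Lambda.lt (s t : Lambda) : Prop := Lambda.le s t ∧ s ≠ t

/-- `r ≺ s` for `r ∈ Λ ∪ {0}` (`none` plays the role of the extra least element `0`). -/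
def precLt : Option Lambda → Lambda → Prop
  | none, _ => True
  | some r, s => Lambda.lt r s

/-- The interval `(r, t] = {s ∈ Λ : r ≺ s ≼ t}`, with `r ∈ Λ ∪ {0}`. -/
def lamIoc (r : Option Lambda) (t : Lambda) : Set Lambda :=
  {s | precLt r s ∧ Lambda.le s t}

/-- The position of the minimum of `t` on the ordinal interval `[δ, β)`. -/
noncomputable def minPos (t : Ordinal.{0} → ℕ) (δ β : Ordinal.{0}) : Ordinal.{0} :=
  sInf {ξ | δ ≤ ξ ∧ ξ < β ∧ ∀ η, δ ≤ η → η < β → t ξ ≤ t η}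

lemma minPos_lt (t : Ordinal.{0} → ℕ) {δ β : Ordinal.{0}} (h : δ < β) : minPos t δ β < β := by
  have hne : {ξ : Ordinal.{0} | δ ≤ ξ ∧ ξ < β ∧ ∀ η, δ ≤ η → η < β → t ξ ≤ t η}.Nonempty := by
    have h1 : {n : ℕ | ∃ ξ : Ordinal.{0}, δ ≤ ξ ∧ ξ < β ∧ t ξ = n}.Nonempty :=
      ⟨t δ, δ, le_refl _, h, rfl⟩
    obtain ⟨ξ, hξ1, hξ2, hξ3⟩ := Nat.sInf_mem h1
    refine ⟨ξ, hξ1, hξ2, fun η h1' h2' => ?_⟩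
    rw [hξ3]
    exact Nat.sInf_le ⟨η, h1', h2', rfl⟩
  obtain ⟨ξ, hξ⟩ := hne
  calc minPos t δ β ≤ ξ := csInf_le (OrderBot.bddBelow _) hξ
    _ < β := hξ.2.1

/-- The sequence `τ` computed from the starting ordinal `β₀` downwards: `τ` is obtained by
repeatedly passing from `β` to the position of the minimum of `t` on `[δ, β)`, stopping upon
reaching `δ`.  The resulting finite sequence `(β_k, …, β_1)` is recorded as a list in the
order `[β_k, …, β_1]` (so concatenation of the lists corresponds to `⌢`). -/
noncomputable def tauFrom (δ : Ordinal.{0}) (t : Ordinal.{0} → ℕ) : Ordinal.{0} → List Ordinal.{0} :=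
  WellFounded.fix wellFounded_lt
    (fun β IH => if h : δ < β then IH (minPos t δ β) (minPos_lt t h) ++ [minPos t δ β] else [])

/-- The finite sequence `τ(s,t)` of ordinals, for `s ≼ t` in `Λ`. -/
noncomputable def tau (s t : Lambda) : List Ordinal.{0} :=
  tauFrom s.dom t.toFun t.dom

/-- `ℓ(s,t)`, the length of `τ(s,t)`. -/
noncomputable def ell (s t : Lambda) : ℕ := (tau s t).length

/-- The underlying set of the `Λ`-duplicate: `D = Λ × {1, -1}`. -/
abbrev Dup : Type 1 := Lambda × ℤˣ

/-- The basic open sets `W(r,t,i)` of the `Λ`-duplicate. -/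
noncomputable def Wset (r : Option Lambda) (t : Lambda) (i : ℤˣ) : Set Dup :=
  {q | q.1 ∈ lamIoc r t ∧ q.2 = (-1) ^ ell q.1 t * i}

/-- The collection of all basic open sets `W(r,t,i)` with `r ≺ t`. -/
noncomputable def WBasis : Set (Set Dup) :=
  {S | ∃ (r : Option Lambda) (t : Lambda) (i : ℤˣ), precLt r t ∧ S = Wset r t i}

/-- The topology of the `Λ`-duplicate, generated by the basic sets `W(r,t,i)`. -/
noncomputable instance : TopologicalSpace Dup := TopologicalSpace.generateFrom WBasis

/-- `p(s,t)`: the value of `t` at the largest entry `β₁` of `τ(s,t)` when `s ≺ t`,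
and `p(t,t) = ∞`. -/
noncomputable def pval (s t : Lambda) : ℕ∞ :=
  match (tau s t).getLast? with
  | none => (⊤ : ℕ∞)
  | some β => (t.toFun β : ℕ∞)

/-- The sets `V(u,i,p) = {(t,j) ∈ D : t ≼ u, p(t,u) ≥ p, j = (-1)^{ℓ(t,u)} i}`. -/
noncomputable def Vset (u : Lambda) (i : ℤˣ) (p : ℕ) : Set Dup :=
  {q | Lambda.le q.1 u ∧ (p : ℕ∞) ≤ pval q.1 u ∧ q.2 = (-1) ^ ell q.1 u * i}



/-! ### Auxiliary lemmas -/

lemma Lambda.ext' {s t : Lambda} (hd : s.dom = t.dom)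
    (hf : ∀ β, β < s.dom → s.toFun β = t.toFun β) : s = t := by
  obtain ⟨f, d, c, i, ci, j⟩ := s
  obtain ⟨f', d', c', i', ci', j'⟩ := t
  simp only at hd hf
  subst hd
  have : f = f' := by
    funext β
    by_cases h : β < d
    · exact hf β h
    · rw [j β h, j' β h]
  subst this
  rfl

lemma Lambda.le_refl (s : Lambda) : Lambda.le s s := ⟨le_rfl, fun _ _ => rfl⟩

lemma Lambda.le_trans {s t u : Lambda} (h1 : Lambda.le s t) (h2 : Lambda.le t u) :
    Lambda.le s u :=
  ⟨h1.1.trans h2.1, fun β hβ => (h1.2 β hβ).trans (h2.2 β (hβ.trans_le h1.1))⟩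

lemma Lambda.lt_dom {s t : Lambda} (h : Lambda.lt s t) : s.dom < t.dom := by
  rcases lt_or_eq_of_le h.1.1 with h' | h'
  · exact h'
  · exact absurd (Lambda.ext' h' h.1.2) h.2

lemma Lambda.le_total_of_le {s t u : Lambda} (h1 : Lambda.le s u) (h2 : Lambda.le t u) :
    Lambda.le s t ∨ Lambda.le t s := by
  rcases le_total s.dom t.dom with h | h
  · exact Or.inl ⟨h, fun β hβ => (h1.2 β hβ).trans ((h2.2 β (hβ.trans_le h)).symm)⟩
  · exact Or.inr ⟨h, fun β hβ => (h2.2 β hβ).trans ((h1.2 β (hβ.trans_le h)).symm)⟩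

/-- The defining set for `minPos`. -/
def minSet (t : Ordinal.{0} → ℕ) (δ β : Ordinal.{0}) : Set Ordinal.{0} :=
  {ξ | δ ≤ ξ ∧ ξ < β ∧ ∀ η, δ ≤ η → η < β → t ξ ≤ t η}

lemma minSet_nonempty (t : Ordinal.{0} → ℕ) {δ β : Ordinal.{0}} (h : δ < β) :
    (minSet t δ β).Nonempty := by
  have h1 : {n : ℕ | ∃ ξ : Ordinal.{0}, δ ≤ ξ ∧ ξ < β ∧ t ξ = n}.Nonempty :=
    ⟨t δ, δ, le_refl _, h, rfl⟩
  obtain ⟨ξ, hξ1, hξ2, hξ3⟩ := Nat.sInf_mem h1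
  refine ⟨ξ, hξ1, hξ2, fun η h1' h2' => ?_⟩
  rw [hξ3]
  exact Nat.sInf_le ⟨η, h1', h2', rfl⟩

lemma minPos_mem (t : Ordinal.{0} → ℕ) {δ β : Ordinal.{0}} (h : δ < β) :
    minPos t δ β ∈ minSet t δ β := by
  have := csInf_mem (minSet_nonempty t h)
  exact this

lemma minPos_le_pos (t : Ordinal.{0} → ℕ) {δ β : Ordinal.{0}} (h : δ < β) :
    δ ≤ minPos t δ β := (minPos_mem t h).1

lemma minPos_min (t : Ordinal.{0} → ℕ) {δ β : Ordinal.{0}} (h : δ < β) :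
    ∀ η, δ ≤ η → η < β → t (minPos t δ β) ≤ t η := (minPos_mem t h).2.2

lemma tauFrom_eq (δ : Ordinal.{0}) (t : Ordinal.{0} → ℕ) (β : Ordinal.{0}) :
    tauFrom δ t β =
      if h : δ < β then tauFrom δ t (minPos t δ β) ++ [minPos t δ β] else [] := by
  unfold tauFrom
  rw [WellFounded.fix_eq]

lemma tauFrom_self (δ : Ordinal.{0}) (t : Ordinal.{0} → ℕ) : tauFrom δ t δ = [] := by
  rw [tauFrom_eq]; simp

lemma tauFrom_of_not_lt {δ β : Ordinal.{0}} (t : Ordinal.{0} → ℕ) (h : ¬ δ < β) :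
    tauFrom δ t β = [] := by
  rw [tauFrom_eq]; simp [h]

lemma tauFrom_of_lt {δ β : Ordinal.{0}} (t : Ordinal.{0} → ℕ) (h : δ < β) :
    tauFrom δ t β = tauFrom δ t (minPos t δ β) ++ [minPos t δ β] := by
  rw [tauFrom_eq]; simp [h]

lemma tauFrom_getLast? {δ β : Ordinal.{0}} (t : Ordinal.{0} → ℕ) (h : δ < β) :
    (tauFrom δ t β).getLast? = some (minPos t δ β) := by
  rw [tauFrom_of_lt t h, List.getLast?_append, List.getLast?_singleton]
  simp

lemma minPos_congr {δ β : Ordinal.{0}} {t t' : Ordinal.{0} → ℕ}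
    (h : ∀ η, δ ≤ η → η < β → t η = t' η) : minPos t δ β = minPos t' δ β := by
  unfold minPos
  congr 1
  ext ξ
  constructor
  · rintro ⟨h1, h2, h3⟩
    exact ⟨h1, h2, fun η hη1 hη2 => by rw [← h ξ h1 h2, ← h η hη1 hη2]; exact h3 η hη1 hη2⟩
  · rintro ⟨h1, h2, h3⟩
    exact ⟨h1, h2, fun η hη1 hη2 => by rw [h ξ h1 h2, h η hη1 hη2]; exact h3 η hη1 hη2⟩

lemma tauFrom_congr {δ : Ordinal.{0}} {t t' : Ordinal.{0} → ℕ} (β : Ordinal.{0})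
    (h : ∀ η, δ ≤ η → η < β → t η = t' η) : tauFrom δ t β = tauFrom δ t' β := by
  induction β using Ordinal.induction with
  | h β IH =>
    by_cases hδ : δ < β
    · have hm : minPos t δ β = minPos t' δ β := minPos_congr h
      rw [tauFrom_of_lt t hδ, tauFrom_of_lt t' hδ, hm]
      congr 1
      exact IH _ (hm ▸ minPos_lt t hδ) fun η h1 h2 =>
        h η h1 (h2.trans ((hm ▸ minPos_lt t hδ)))
    · rw [tauFrom_of_not_lt t hδ, tauFrom_of_not_lt t' hδ]

/-- Key concatenation lemma: if every value of `t` on `[δ, μ)` exceeds `t μ`,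
then the descent from any `β ≥ μ` down to `δ` passes through `μ`. -/
lemma tauFrom_append {δ μ : Ordinal.{0}} {t : Ordinal.{0} → ℕ} (hδμ : δ < μ)
    (H : ∀ η, δ ≤ η → η < μ → t μ < t η) :
    ∀ β, μ ≤ β → tauFrom δ t β = tauFrom δ t μ ++ tauFrom μ t β := by
  intro β
  induction β using Ordinal.induction with
  | h β IH =>
    intro hμβ
    rcases eq_or_lt_of_le hμβ with h | h
    · rw [← h, tauFrom_self, List.append_nil]
    · have hsets : minSet t δ β = minSet t μ β := by
        ext ξ
        constructor
        · rintro ⟨h1, h2, h3⟩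
          have hξμ : μ ≤ ξ := by
            by_contra hc
            push_neg at hc
            exact absurd (h3 μ (le_of_lt hδμ) h) (not_le.mpr (H ξ h1 hc))
          exact ⟨hξμ, h2, fun η hη1 hη2 => h3 η ((le_of_lt hδμ).trans hη1) hη2⟩
        · rintro ⟨h1, h2, h3⟩
          refine ⟨(le_of_lt hδμ).trans h1, h2, fun η hη1 hη2 => ?_⟩
          rcases lt_or_ge η μ with hη | hη
          · exact le_of_lt ((h3 μ le_rfl h).trans_lt (H η hη1 hη))
          · exact h3 η hη hη2
      have hm : minPos t δ β = minPos t μ β := congrArg sInf hsets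
      have hlt : minPos t μ β < β := minPos_lt t h
      have hle : μ ≤ minPos t μ β := minPos_le_pos t h
      rw [tauFrom_of_lt t (hδμ.trans h), tauFrom_of_lt t h, hm,
        IH _ hlt hle, List.append_assoc]


/-- Restriction of `t` to a smaller domain. -/
noncomputable def Lambda.restrict (t : Lambda) (γ : Ordinal.{0}) (h : γ ≤ t.dom) : Lambda where
  toFun β := if β < γ then t.toFun β else 0
  dom := γ
  countable := (Ordinal.card_le_card h).trans t.countable
  inj := fun β β' hβ hβ' he => by
    simp only [if_pos hβ, if_pos hβ'] at he
    exact t.inj β β' (hβ.trans_le h) (hβ'.trans_le h) he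
  coinfinite := t.coinfinite.mono fun n hn β hβ => by
    simp only [if_pos hβ]; exact hn β (hβ.trans_le h)
  junk := fun β hβ => if_neg hβ

lemma Lambda.restrict_lt (t : Lambda) {γ : Ordinal.{0}} (h : γ < t.dom) :
    Lambda.lt (t.restrict γ h.le) t := by
  constructor
  · exact ⟨h.le, fun β hβ => if_pos hβ⟩
  · intro he
    exact absurd (congrArg Lambda.dom he) (ne_of_lt h)

lemma exists_r (t : Lambda) (K : ℕ) :
    ∃ r : Option Lambda, precLt r t ∧ ∀ s ∈ lamIoc r t,
      s = t ∨ (Lambda.lt s t ∧ ∀ η, s.dom ≤ η → η < t.dom → K < t.toFun η) := by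
  rcases Ordinal.zero_or_succ_or_isSuccLimit t.dom with h0 | ⟨δ, hδ⟩ | hlim
  · refine ⟨none, trivial, fun s hs => Or.inl ?_⟩
    have hd : s.dom = t.dom := le_antisymm hs.2.1 (by rw [h0]; exact zero_le)
    exact Lambda.ext' hd hs.2.2
  · replace hδ := hδ.symm
    have hδlt : δ < t.dom := by rw [hδ]; exact Order.lt_succ δ
    refine ⟨some (t.restrict δ hδlt.le), t.restrict_lt hδlt, fun s hs => Or.inl ?_⟩
    by_contra hne
    have hst : Lambda.lt s t := ⟨hs.2, hne⟩
    have h1 : s.dom < t.dom := Lambda.lt_dom hst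
    have h2 : δ < s.dom := Lambda.lt_dom hs.1
    rw [hδ, Order.lt_succ_iff] at h1
    exact absurd h1 (not_le.mpr h2)
  · set A : Set Ordinal.{0} := {γ | γ < t.dom ∧ t.toFun γ ≤ K} with hA
    have hAfin : A.Finite := by
      have himg : (t.toFun '' A).Finite :=
        (Set.finite_le_nat K).subset (by rintro n ⟨γ, hγ, rfl⟩; exact hγ.2)
      refine Set.Finite.of_finite_image himg ?_
      intro γ hγ γ' hγ' he
      exact t.inj γ γ' hγ.1 hγ'.1 he
    obtain ⟨γ₀, hγ₀lt, hγ₀⟩ : ∃ γ₀, γ₀ < t.dom ∧ ∀ γ ∈ A, γ < γ₀ := by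
      rcases A.eq_empty_or_nonempty with he | hne
      · exact ⟨0, hlim.pos, fun γ hγ => by rw [he] at hγ; exact absurd hγ (Set.notMem_empty γ)⟩
      · refine ⟨Order.succ (sSup A), hlim.succ_lt ((hne.csSup_mem hAfin).1), fun γ hγ => ?_⟩
        exact Order.lt_succ_iff.mpr (le_csSup hAfin.bddAbove hγ)
    refine ⟨some (t.restrict γ₀ hγ₀lt.le), t.restrict_lt hγ₀lt, fun s hs => ?_⟩
    rcases eq_or_ne s t with he | hne
    · exact Or.inl he
    · have hst : Lambda.lt s t := ⟨hs.2, hne⟩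
      refine Or.inr ⟨hst, fun η hη1 hη2 => ?_⟩
      have h2 : γ₀ < s.dom := Lambda.lt_dom hs.1
      by_contra hc
      push_neg at hc
      exact absurd (hγ₀ η ⟨hη2, hc⟩) (not_lt.mpr (h2.le.trans hη1))


lemma tau_self (t : Lambda) : tau t t = [] := tauFrom_of_not_lt _ (lt_irrefl _)

lemma ell_self (t : Lambda) : ell t t = 0 := by unfold ell; rw [tau_self]; rfl

lemma pval_self (t : Lambda) : pval t t = ⊤ := by
  unfold pval; rw [tau_self]; rfl

lemma pval_of_dom_lt {s u : Lambda} (h : s.dom < u.dom) :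
    pval s u = (u.toFun (minPos u.toFun s.dom u.dom) : ℕ∞) := by
  unfold pval tau
  rw [tauFrom_getLast? _ h]

lemma mem_Vself (p : ℕ) (x : Dup) : x ∈ Vset x.1 x.2 p := by
  refine ⟨Lambda.le_refl _, ?_, ?_⟩
  · rw [pval_self]; exact le_top
  · rw [ell_self, pow_zero, one_mul]

/-- Separation: if `t₁ ≺ t₂`, for suitable `p` no `u` above both can have `p(t₁,u) ≥ p`. -/
lemma sep_of_lt {t₁ t₂ : Lambda} (h : Lambda.lt t₁ t₂) :
    ∃ p : ℕ, ∀ u : Lambda, Lambda.le t₁ u → Lambda.le t₂ u → ¬ ((p : ℕ∞) ≤ pval t₁ u) := by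
  have hd : t₁.dom < t₂.dom := Lambda.lt_dom h
  set η₀ := minPos t₂.toFun t₁.dom t₂.dom with hη₀
  have hmem := minPos_mem t₂.toFun hd
  refine ⟨t₂.toFun η₀ + 1, fun u h1 h2 hple => ?_⟩
  have hdu : t₁.dom < u.dom := hd.trans_le h2.1
  rw [pval_of_dom_lt hdu] at hple
  have hη₀u : η₀ < u.dom := hmem.2.1.trans_le h2.1
  have hle : u.toFun (minPos u.toFun t₁.dom u.dom) ≤ u.toFun η₀ :=
    minPos_min u.toFun hdu η₀ hmem.1 hη₀u
  have heq : u.toFun η₀ = t₂.toFun η₀ := (h2.2 η₀ hmem.2.1).symm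
  have : (t₂.toFun η₀ + 1 : ℕ) ≤ u.toFun (minPos u.toFun t₁.dom u.dom) := by
    exact_mod_cast hple
  omega

lemma pval_eq_of_append {s t u : Lambda} (hd : t.dom < u.dom)
    (htau : tau s u = tau s t ++ tau t u) : pval s u = pval t u := by
  unfold pval
  rw [htau, List.getLast?_append_of_ne_nil]
  intro hnil
  rw [show tau t u = tauFrom t.dom u.toFun u.dom from rfl, tauFrom_of_lt _ hd] at hnil
  simp at hnil

/-- The key neighborhood lemma: every point of `V(u,i,p)` has a basic `W`-neighborhood
contained in `V(u,i,p)`. -/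
lemma Vset_nbhd {u : Lambda} {i : ℤˣ} {p : ℕ} {x : Dup} (hx : x ∈ Vset u i p) :
    ∃ r, precLt r x.1 ∧ x ∈ Wset r x.1 x.2 ∧ Wset r x.1 x.2 ⊆ Vset u i p := by
  obtain ⟨t, j⟩ := x
  obtain ⟨htu, hp, hj⟩ := hx
  dsimp only at htu hp hj
  obtain ⟨r, hr1, hr2⟩ := exists_r t (max p (u.toFun t.dom))
  refine ⟨r, hr1, ⟨⟨hr1, Lambda.le_refl t⟩, by rw [ell_self, pow_zero, one_mul]⟩, ?_⟩
  rintro ⟨s, j'⟩ ⟨hs, hj'⟩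
  dsimp only at hs hj' ⊢
  rcases hr2 s hs with rfl | ⟨hst, hbig⟩
  · rw [ell_self, pow_zero, one_mul] at hj'
    exact ⟨htu, hp, by rw [hj', hj]⟩
  · have hsd : s.dom < t.dom := Lambda.lt_dom hst
    rcases eq_or_ne t u with rfl | htne
    · -- t = u
      refine ⟨hst.1, ?_, ?_⟩
      · have hsu : s.dom < t.dom := hsd
        rw [pval_of_dom_lt hsu]
        have hmem := minPos_mem t.toFun hsu
        have := hbig _ hmem.1 hmem.2.1
        have hple : p < t.toFun (minPos t.toFun s.dom t.dom) :=
          lt_of_le_of_lt (le_max_left _ _) this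
        exact_mod_cast hple.le
      · rw [ell_self, pow_zero, one_mul] at hj
        rw [hj', hj]
    · -- t ≺ u
      have htd : t.dom < u.dom := Lambda.lt_dom ⟨htu, htne⟩
      have H : ∀ η, s.dom ≤ η → η < t.dom → u.toFun t.dom < u.toFun η := by
        intro η h1 h2
        have h3 : u.toFun η = t.toFun η := (htu.2 η h2).symm
        have h4 := hbig η h1 h2
        have h5 : u.toFun t.dom ≤ max p (u.toFun t.dom) := le_max_right _ _
        omega
      have htau : tau s u = tau s t ++ tau t u := by
        have h1 : tauFrom s.dom u.toFun u.dom =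
            tauFrom s.dom u.toFun t.dom ++ tauFrom t.dom u.toFun u.dom :=
          tauFrom_append hsd H u.dom htd.le
        have h2 : tauFrom s.dom u.toFun t.dom = tauFrom s.dom t.toFun t.dom :=
          tauFrom_congr _ fun η _ hη2 => (htu.2 η hη2).symm
        rw [show tau s u = tauFrom s.dom u.toFun u.dom from rfl, h1, h2]; rfl
      refine ⟨Lambda.le_trans hst.1 htu, ?_, ?_⟩
      · rw [pval_eq_of_append htd htau]; exact hp
      · have hell : ell s u = ell s t + ell t u := by
          unfold ell; rw [htau, List.length_append]
        rw [hj', hj, hell, pow_add, mul_assoc]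

/-- The `Λ`-duplicate `D` has a Gδ-diagonal, witnessed by the families
`𝒢 p = {V(u,i,p) : (u,i) ∈ D}`: these consist of open sets, cover `D`, and for any two
distinct points of `D` there is `p` such that no member of `𝒢 p` contains both points. -/
theorem dup_gdelta_diagonal :
    IsGδ (Set.diagonal Dup) ∧
    (∀ (p : ℕ) (u : Lambda) (i : ℤˣ), IsOpen (Vset u i p)) ∧
    (∀ (p : ℕ) (x : Dup), ∃ (u : Lambda) (i : ℤˣ), x ∈ Vset u i p) ∧
    (∀ x y : Dup, x ≠ y → ∃ p : ℕ, ∀ (u : Lambda) (i : ℤˣ),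
      ¬ (x ∈ Vset u i p ∧ y ∈ Vset u i p)) := by
  -- openness
  have hopen : ∀ (p : ℕ) (u : Lambda) (i : ℤˣ), IsOpen (Vset u i p) := by
    intro p u i
    rw [isOpen_iff_forall_mem_open]
    intro x hx
    obtain ⟨r, hr, hxW, hWV⟩ := Vset_nbhd hx
    exact ⟨Wset r x.1 x.2, hWV,
      TopologicalSpace.GenerateOpen.basic _ ⟨r, x.1, x.2, hr, rfl⟩, hxW⟩
  -- covering
  have hcov : ∀ (p : ℕ) (x : Dup), ∃ (u : Lambda) (i : ℤˣ), x ∈ Vset u i p :=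
    fun p x => ⟨x.1, x.2, mem_Vself p x⟩
  -- separation
  have hsep : ∀ x y : Dup, x ≠ y → ∃ p : ℕ, ∀ (u : Lambda) (i : ℤˣ),
      ¬ (x ∈ Vset u i p ∧ y ∈ Vset u i p) := by
    intro x y hxy
    by_cases h1 : x.1 = y.1
    · refine ⟨0, fun u i ⟨hx, hy⟩ => hxy ?_⟩
      have h2 : x.2 = y.2 := by rw [hx.2.2, hy.2.2, h1]
      exact Prod.ext h1 h2
    · by_cases hc : Lambda.le x.1 y.1
      · obtain ⟨p, hp⟩ := sep_of_lt (⟨hc, h1⟩ : Lambda.lt x.1 y.1)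
        exact ⟨p, fun u i ⟨hx, hy⟩ => hp u hx.1 hy.1 hx.2.1⟩
      · by_cases hc' : Lambda.le y.1 x.1
        · obtain ⟨p, hp⟩ := sep_of_lt (⟨hc', fun h => h1 h.symm⟩ : Lambda.lt y.1 x.1)
          exact ⟨p, fun u i ⟨hx, hy⟩ => hp u hy.1 hx.1 hy.2.1⟩
        · refine ⟨0, fun u i ⟨hx, hy⟩ => ?_⟩
          rcases Lambda.le_total_of_le hx.1 hy.1 with h | h
          · exact hc h
          · exact hc' h
  refine ⟨?_, hopen, hcov, hsep⟩
  have hdiag : Set.diagonal Dup =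
      ⋂ (p : ℕ), ⋃ (u : Lambda) (i : ℤˣ), (Vset u i p) ×ˢ (Vset u i p) := by
    ext ⟨x, y⟩
    simp only [Set.mem_diagonal_iff, Set.mem_iInter, Set.mem_iUnion, Set.mem_prod]
    constructor
    · rintro h p
      obtain ⟨u, i, hu⟩ := hcov p x
      exact ⟨u, i, hu, h ▸ hu⟩
    · intro h
      by_contra hne
      obtain ⟨p, hp⟩ := hsep x y hne
      obtain ⟨u, i, h1, h2⟩ := h p
      exact hp u i ⟨h1, h2⟩
  rw [hdiag]
  exact IsGδ.iInter fun p =>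
    (isOpen_iUnion fun u => isOpen_iUnion fun i => (hopen p u i).prod (hopen p u i)).isGδ
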